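/- Let $0 \le \tau < 1$ and $r > 0$ with $r^2(1-\tau) > 1$, and set $\dot a = r(1-\tau) + 1/r$ and $\dot b = r(1-\tau) - 1/r > 0$. Let $c \ge 0$ satisfy $4(1-\tau)/\dot a \le c \le \dot a$. Then $\min_{\lambda \in [0,c]}\ \min_{\varphi \in [0,2\pi)} \big|\lambda - \gamma_\tau(re^{i\varphi})\big|^2 = \big(r(1-\tau) + 1/r - c\big)^2$, where $\gamma_\tau(z) = z(1-\tau) + 1/z$. -/

import Mathlib

private lemma zhu_key (a b c l t : ℝ) (hb : 0 < b) (hba : b < a) (hl0 : 0 ≤ l) (hlc : l ≤ c)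
    (hca : c ≤ a) (hx : a^2 - b^2 ≤ c * a) (ht : -1 ≤ t) (ht1 : t ≤ 1) :
    (a - c)^2 ≤ (l - a*t)^2 + b^2*(1 - t^2) := by
  have hac : 0 ≤ a - c := by linarith
  have hab2 : 0 ≤ a^2 - b^2 := by nlinarith
  have h1 : (a-c)*a ≤ b^2 := by nlinarith
  rcases le_or_gt c (a*t) with h | h
  · have e1 : (a*t - c)^2 ≤ (l - a*t)^2 := by nlinarith
    have e2 : (a^2-b^2)*(1+t) ≤ 2*(c*a) := by
      nlinarith [mul_nonneg hab2 (sub_nonneg.2 ht1)]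
    nlinarith [mul_nonneg (sub_nonneg.2 ht1) (sub_nonneg.2 e2)]
  · rcases le_or_gt t 0 with h2 | h2
    · have e1 : a^2*t^2 ≤ (l - a*t)^2 := by
        nlinarith [mul_nonneg hl0 (mul_nonneg (by linarith : (0:ℝ) ≤ a) (by linarith : 0 ≤ -t))]
      nlinarith [mul_nonneg hac (sub_nonneg.2 h1), sq_nonneg t,
        mul_nonneg (mul_nonneg hac hac) (sq_nonneg t)]
    · have e1 : a - c ≤ a*(1-t) := by nlinarith
      have e2 : (a-c)^2 ≤ (1-t)*b^2 := by nlinarith [mul_nonneg (sub_nonneg.2 ht1) hac]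
      nlinarith [sq_nonneg (l - a*t), mul_nonneg (mul_nonneg h2.le (sub_nonneg.2 ht1)) (sq_nonneg b)]

private lemma zhu_abs (τ r l φ : ℝ) (hr : r ≠ 0) :
    ‖((l : ℂ) -
          (((r : ℂ) * Complex.exp (Complex.I * (φ : ℂ))) * (1 - (τ : ℂ))
            + 1 / ((r : ℂ) * Complex.exp (Complex.I * (φ : ℂ)))))‖ ^ 2
      = (l - (r*(1-τ) + 1/r) * Real.cos φ) ^ 2
        + ((r*(1-τ) - 1/r) * Real.sin φ) ^ 2 := by
  have hrc : (r:ℂ) ≠ 0 := by exact_mod_cast hr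
  have he : Complex.exp (Complex.I * (φ:ℂ)) ≠ 0 := Complex.exp_ne_zero _
  have hinv : 1 / ((r : ℂ) * Complex.exp (Complex.I * (φ : ℂ)))
      = (r:ℂ)⁻¹ * Complex.exp (((-φ : ℝ) : ℂ) * Complex.I) := by
    rw [one_div, mul_inv, ← Complex.exp_neg]
    push_cast
    ring_nf
  have hmc : Complex.I * (φ:ℂ) = (φ:ℂ) * Complex.I := mul_comm _ _
  rw [hinv, hmc, Complex.exp_mul_I, Complex.exp_mul_I]
  have hz : (l : ℂ) -
      (((r : ℂ) * (Complex.cos φ + Complex.sin φ * Complex.I)) * (1 - (τ : ℂ))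
        + (r:ℂ)⁻¹ * (Complex.cos (-φ:ℝ) + Complex.sin (-φ:ℝ) * Complex.I))
      = ((l - (r*(1-τ) + 1/r) * Real.cos φ : ℝ) : ℂ)
        + ((-((r*(1-τ) - 1/r) * Real.sin φ) : ℝ) : ℂ) * Complex.I := by
    push_cast [Real.cos_neg, Real.sin_neg, Complex.cos_neg, Complex.sin_neg]
    field_simp
    ring
  rw [hz, Complex.sq_norm, Complex.normSq_add_mul_I]
  ring

/-- for `0 ≤ τ < 1`, `r > 0` with `r²(1-τ) > 1`, half-axes
`ȧ = r(1-τ) + 1/r`, `ḃ = r(1-τ) - 1/r > 0`, and `c ≥ 0` with `4(1-τ)/ȧ ≤ c ≤ ȧ`, the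
minimum over `λ ∈ [0,c]` and `φ ∈ [0,2π)` of `|λ - γ_τ(re^{iφ})|²`, where
`γ_τ(z) = z(1-τ) + 1/z`, equals `(r(1-τ) + 1/r - c)²`. -/
theorem min_dist_sq_to_zhukovsky_ellipse
    (τ r c : ℝ) (hτ0 : 0 ≤ τ) (hτ1 : τ < 1) (hr : 0 < r)
    (hr2 : 1 < r ^ 2 * (1 - τ)) (hc0 : 0 ≤ c)
    (hcl : 4 * (1 - τ) / (r * (1 - τ) + 1 / r) ≤ c)
    (hcu : c ≤ r * (1 - τ) + 1 / r) :
    sInf {D : ℝ | ∃ l φ : ℝ, l ∈ Set.Icc 0 c ∧ φ ∈ Set.Ico 0 (2 * Real.pi) ∧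
        D = ‖((l : ℂ) -
          (((r : ℂ) * Complex.exp (Complex.I * (φ : ℂ))) * (1 - (τ : ℂ))
            + 1 / ((r : ℂ) * Complex.exp (Complex.I * (φ : ℂ)))))‖ ^ 2}
      = (r * (1 - τ) + 1 / r - c) ^ 2 := by
  set a := r * (1 - τ) + 1 / r with ha
  set b := r * (1 - τ) - 1 / r with hb
  have hτ : 0 < 1 - τ := by linarith
  have hrinv : 0 < 1 / r := by positivity
  have hbpos : 0 < b := by
    rw [hb]
    have : 1 / r < r * (1 - τ) := by
      rw [div_lt_iff₀ hr]
      nlinarith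
    linarith
  have hapos : 0 < a := by rw [ha]; positivity
  have hba : b < a := by rw [ha, hb]; linarith
  have hx : a ^ 2 - b ^ 2 ≤ c * a := by
    have h4 : a^2 - b^2 = 4 * (1 - τ) := by
      rw [ha, hb]; field_simp; ring
    rw [h4]
    rw [div_le_iff₀ hapos] at hcl
    linarith
  -- lower bound for all elements
  have hlow : ∀ D ∈ {D : ℝ | ∃ l φ : ℝ, l ∈ Set.Icc 0 c ∧ φ ∈ Set.Ico 0 (2 * Real.pi) ∧
        D = ‖((l : ℂ) -
          (((r : ℂ) * Complex.exp (Complex.I * (φ : ℂ))) * (1 - (τ : ℂ))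
            + 1 / ((r : ℂ) * Complex.exp (Complex.I * (φ : ℂ)))))‖ ^ 2},
      (a - c) ^ 2 ≤ D := by
    rintro D ⟨l, φ, ⟨hl0, hlc⟩, _, rfl⟩
    rw [zhu_abs τ r l φ hr.ne']
    have hs : Real.sin φ ^ 2 = 1 - Real.cos φ ^ 2 := by
      have := Real.sin_sq_add_cos_sq φ; linarith
    have := zhu_key a b c l (Real.cos φ) hbpos hba hl0 hlc hcu hx
      (Real.neg_one_le_cos φ) (Real.cos_le_one φ)
    calc (a - c)^2 ≤ (l - a * Real.cos φ)^2 + b^2 * (1 - Real.cos φ ^ 2) := this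
      _ = (l - a * Real.cos φ)^2 + (b * Real.sin φ)^2 := by rw [mul_pow, hs]
  -- membership of the value
  have hmem : (a - c) ^ 2 ∈ {D : ℝ | ∃ l φ : ℝ, l ∈ Set.Icc 0 c ∧ φ ∈ Set.Ico 0 (2 * Real.pi) ∧
        D = ‖((l : ℂ) -
          (((r : ℂ) * Complex.exp (Complex.I * (φ : ℂ))) * (1 - (τ : ℂ))
            + 1 / ((r : ℂ) * Complex.exp (Complex.I * (φ : ℂ)))))‖ ^ 2} := by
    refine ⟨c, 0, ⟨hc0, le_refl c⟩, ⟨le_refl 0, by positivity⟩, ?_⟩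
    rw [zhu_abs τ r c 0 hr.ne']
    simp [Real.cos_zero, Real.sin_zero]
    ring
  apply le_antisymm
  · exact csInf_le ⟨(a - c)^2, hlow⟩ hmem
  · exact le_csInf ⟨_, hmem⟩ hlow
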